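/- Let K ≥ 1 be an integer, γ ∈ (0,1), η > 0, and let w : {1,…,K} → ℝ satisfy w(i) > 0 for all i. Set W := Σ_{i=1}^K w(i) and π(i) := (1−γ)·w(i)/W + γ/K. Let z : {1,…,K} → ℝ satisfy |η·z(i)| ≤ 1 for every i. Then log(Σ_{i=1}^K (w(i)/W)·exp(−η·z(i))) ≤ Σ_{i=1}^K (π(i)/(1−γ))·(−η·z(i) + η²·z(i)²) + (η·γ/(K·(1−γ)))·Σ_{i=1}^K z(i). -/
import Mathlib


open Finset

lemma exp_le_quad {x : ℝ} (hx : |x| ≤ 1) : Real.exp x ≤ 1 + x + x ^ 2 := by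
  have h := Real.exp_bound hx (n := 2) (by norm_num)
  have h2 : ∑ i ∈ Finset.range 2, x ^ i / (Nat.factorial i) = 1 + x := by
    simp [Finset.sum_range_succ, Nat.factorial]
  rw [h2] at h
  have habs : |x| ^ 2 = x ^ 2 := sq_abs x
  have h3 : Real.exp x - (1 + x) ≤ |x| ^ 2 * (3 / ((Nat.factorial 2 : ℝ) * 2)) :=
    le_trans (le_abs_self _) h
  simp [Nat.factorial] at h3
  nlinarith [sq_nonneg x]

theorem stmt6 (K : ℕ) (hK : 1 ≤ K) (γ η : ℝ) (hγ0 : 0 < γ) (hγ1 : γ < 1) (hη : 0 < η)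
    (w : Fin K → ℝ) (hw : ∀ i, 0 < w i)
    (z : Fin K → ℝ) (hz : ∀ i, |η * z i| ≤ 1) :
    Real.log (∑ i, (w i / ∑ j, w j) * Real.exp (-(η * z i)))
      ≤ (∑ i, (((1 - γ) * w i / (∑ j, w j) + γ / K) / (1 - γ)) *
            (-(η * z i) + η ^ 2 * z i ^ 2))
        + η * γ / (K * (1 - γ)) * ∑ i, z i := by
  haveI : Nonempty (Fin K) := Fin.pos_iff_nonempty.mp (by omega)
  set W := ∑ j, w j with hWdef
  have hWpos : 0 < W := Finset.sum_pos (fun i _ => hw i) Finset.univ_nonempty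
  have hWne : W ≠ 0 := ne_of_gt hWpos
  have h1γ : (0:ℝ) < 1 - γ := by linarith
  have h1γne : (1:ℝ) - γ ≠ 0 := ne_of_gt h1γ
  have hKpos : (0:ℝ) < (K:ℝ) := by exact_mod_cast Nat.lt_of_lt_of_le Nat.zero_lt_one hK
  have hKne : (K:ℝ) ≠ 0 := ne_of_gt hKpos
  have hc : 0 ≤ γ / ((K:ℝ) * (1 - γ)) := by positivity
  -- positivity of the sum inside log
  have hpos : 0 < ∑ i, (w i / W) * Real.exp (-(η * z i)) :=
    Finset.sum_pos (fun i _ => mul_pos (div_pos (hw i) hWpos) (Real.exp_pos _))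
      Finset.univ_nonempty
  have hp1 : ∑ i, w i / W = 1 := by
    rw [← Finset.sum_div, div_self hWne]
  have hRHS : (∑ i, (((1 - γ) * w i / W + γ / K) / (1 - γ)) *
            (-(η * z i) + η ^ 2 * z i ^ 2))
        + η * γ / (K * (1 - γ)) * ∑ i, z i
      = (∑ i, (w i / W) * (-(η * z i) + η ^ 2 * z i ^ 2))
        + ∑ i, γ / ((K:ℝ) * (1 - γ)) * (η ^ 2 * z i ^ 2) := by
    rw [Finset.mul_sum, ← Finset.sum_add_distrib, ← Finset.sum_add_distrib]
    apply Finset.sum_congr rfl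
    intro i _
    field_simp
    ring
  rw [hRHS]
  have step1 : Real.log (∑ i, (w i / W) * Real.exp (-(η * z i)))
      ≤ (∑ i, (w i / W) * Real.exp (-(η * z i))) - 1 :=
    Real.log_le_sub_one_of_pos hpos
  have step2 : (∑ i, (w i / W) * Real.exp (-(η * z i)))
      ≤ ∑ i, (w i / W) * (1 + (-(η * z i)) + (-(η * z i)) ^ 2) := by
    apply Finset.sum_le_sum
    intro i _
    apply mul_le_mul_of_nonneg_left _ (le_of_lt (div_pos (hw i) hWpos))
    exact exp_le_quad (by rw [abs_neg]; exact hz i)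
  have step3 : (∑ i, (w i / W) * (1 + (-(η * z i)) + (-(η * z i)) ^ 2)) - 1
      = ∑ i, (w i / W) * (-(η * z i) + η ^ 2 * z i ^ 2) := by
    have : ∀ i : Fin K, (w i / W) * (1 + (-(η * z i)) + (-(η * z i)) ^ 2)
        = w i / W + (w i / W) * (-(η * z i) + η ^ 2 * z i ^ 2) := by
      intro i; ring
    rw [Finset.sum_congr rfl (fun i _ => this i), Finset.sum_add_distrib, hp1]
    ring
  have step4 : (∑ i, (w i / W) * (-(η * z i) + η ^ 2 * z i ^ 2))
      ≤ (∑ i, (w i / W) * (-(η * z i) + η ^ 2 * z i ^ 2))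
        + ∑ i, γ / ((K:ℝ) * (1 - γ)) * (η ^ 2 * z i ^ 2) := by
    apply le_add_of_nonneg_right
    apply Finset.sum_nonneg
    intro i _
    positivity
  calc Real.log (∑ i, (w i / W) * Real.exp (-(η * z i)))
      ≤ (∑ i, (w i / W) * Real.exp (-(η * z i))) - 1 := step1
    _ ≤ (∑ i, (w i / W) * (1 + (-(η * z i)) + (-(η * z i)) ^ 2)) - 1 := by linarith [step2]
    _ = ∑ i, (w i / W) * (-(η * z i) + η ^ 2 * z i ^ 2) := step3
    _ ≤ _ := step4
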